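/- Let G = (I ∪ J, E) be a balanced bipartite graph without isolated vertices, and let S ⊆ I be a nonempty set that is inclusion-wise minimal with the property |S| ≥ |N(S)|. Then the subgraph of G induced by S together with its neighborhood has a matching covering S. -/
import Mathlib


/-- `S` is an independent set in `G`. -/
def IsIndepSet {V : Type*} (G : SimpleGraph V) (S : Finset V) : Prop :=
  ∀ u ∈ S, ∀ v ∈ S, ¬ G.Adj u v

/-- The open neighborhood of a vertex set `S` in `G`. -/
def nbhd {V : Type*} [Fintype V] [DecidableEq V] (G : SimpleGraph V) [DecidableRel G.Adj]
    (S : Finset V) : Finset V :=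
  (S.biUnion fun v => G.neighborFinset v) \ S

lemma mem_biUnion_not_in_I {V : Type*} [Fintype V] [DecidableEq V]
    (G : SimpleGraph V) [DecidableRel G.Adj] {I : Finset V}
    (hIind : IsIndepSet G I) {T : Finset V} (hTI : T ⊆ I) {w : V}
    (hw : w ∈ T.biUnion fun v => G.neighborFinset v) : w ∉ I := by
  obtain ⟨t, htT, hwt⟩ := Finset.mem_biUnion.mp hw
  rw [SimpleGraph.mem_neighborFinset] at hwt
  intro hwI
  exact hIind t (hTI htT) w hwI hwt

lemma nbhd_eq_biUnion {V : Type*} [Fintype V] [DecidableEq V]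
    (G : SimpleGraph V) [DecidableRel G.Adj] {I : Finset V}
    (hIind : IsIndepSet G I) {T : Finset V} (hTI : T ⊆ I) :
    nbhd G T = T.biUnion fun v => G.neighborFinset v := by
  unfold nbhd
  rw [Finset.sdiff_eq_self_iff_disjoint]
  rw [Finset.disjoint_left]
  intro w hw hwT
  exact mem_biUnion_not_in_I G hIind hTI hw (hTI hwT)

/-- in a balanced bipartite graph without isolated vertices, if `S ⊆ I` is
nonempty and inclusion-wise minimal with `|N(S)| ≤ |S|`, then the subgraph induced by
`S ∪ N(S)` has a matching covering `S` (an injection of `S` into `N(S)` along edges). -/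
theorem minimal_set_has_saturating_matching {V : Type*} [Fintype V] [DecidableEq V]
    (G : SimpleGraph V) [DecidableRel G.Adj] (I J : Finset V)
    (hpart : I ∪ J = Finset.univ) (hdisj : Disjoint I J)
    (hIind : IsIndepSet G I) (hJind : IsIndepSet G J) (hbal : I.card = J.card)
    (hnoiso : ∀ v : V, ∃ w, G.Adj v w)
    (S : Finset V) (hSI : S ⊆ I) (hSne : S.Nonempty)
    (hS : (nbhd G S).card ≤ S.card)
    (hmin : ∀ S' ⊆ S, S'.Nonempty → S' ≠ S → ¬ ((nbhd G S').card ≤ S'.card)) :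
    ∃ f : {x // x ∈ S} → V, Function.Injective f ∧
      ∀ x : {x // x ∈ S}, f x ∈ nbhd G S ∧ G.Adj x.1 (f x) := by
  -- Hall's condition for every `T ⊆ S`
  have hall : ∀ T ⊆ S, T.card ≤ (T.biUnion fun v => G.neighborFinset v).card := by
    intro T hTS
    rcases T.eq_empty_or_nonempty with rfl | hTne
    · simp
    rw [← nbhd_eq_biUnion G hIind (hTS.trans hSI)]
    by_cases hTeq : T = S
    · subst hTeq
      -- show S.card ≤ (nbhd G S).card
      obtain ⟨v, hv⟩ := hSne
      by_cases hsing : T = {v}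
      · subst hsing
        obtain ⟨w, hw⟩ := hnoiso v
        have hwmem : w ∈ nbhd G {v} := by
          rw [nbhd_eq_biUnion G hIind (hSI)]
          simp [SimpleGraph.mem_neighborFinset, hw]
        calc ({v} : Finset V).card = 1 := Finset.card_singleton v
          _ ≤ (nbhd G {v}).card := Finset.card_pos.mpr ⟨w, hwmem⟩
      · have htriv : T.Nontrivial := by
          rcases Finset.eq_singleton_or_nontrivial hv with h | h
          · exact absurd h hsing
          · exact h
        obtain ⟨w, hwT, hwv⟩ := htriv.exists_ne v
        have herase : (T.erase v).Nonempty := ⟨w, Finset.mem_erase.mpr ⟨hwv, hwT⟩⟩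
        have hne : T.erase v ≠ T := fun h => (h ▸ Finset.notMem_erase v T) hv
        have hlt := hmin (T.erase v) (Finset.erase_subset v T) herase hne
        push_neg at hlt
        have hcard : (T.erase v).card = T.card - 1 := Finset.card_erase_of_mem hv
        have hTpos : 1 ≤ T.card := Finset.card_pos.mpr ⟨v, hv⟩
        have hsub : nbhd G (T.erase v) ⊆ nbhd G T := by
          rw [nbhd_eq_biUnion G hIind ((Finset.erase_subset v T).trans hSI),
            nbhd_eq_biUnion G hIind hSI]
          exact Finset.biUnion_subset_biUnion_of_subset_left _ (Finset.erase_subset v T)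
        have := Finset.card_le_card hsub
        omega
    · have := hmin T hTS hTne hTeq
      omega
  have hcond : ∀ s : Finset {x // x ∈ S},
      s.card ≤ (s.biUnion fun x : {x // x ∈ S} => G.neighborFinset x.1).card := by
    intro s
    have hc : s.card = (s.image (fun x : {x // x ∈ S} => x.1)).card :=
      (Finset.card_image_of_injective s Subtype.val_injective).symm
    rw [hc]
    have himg : (s.image (fun x : {x // x ∈ S} => x.1)) ⊆ S := by
      intro y hy
      obtain ⟨x, _, rfl⟩ := Finset.mem_image.mp hy
      exact x.2
    refine (hall _ himg).trans (le_of_eq (congrArg Finset.card ?_))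
    ext w
    simp [Finset.mem_biUnion]
  obtain ⟨f, hinj, hf⟩ :=
    (Finset.all_card_le_biUnion_card_iff_exists_injective
      (fun x : {x // x ∈ S} => G.neighborFinset x.1)).mp hcond
  refine ⟨f, hinj, fun x => ?_⟩
  have hadj : G.Adj x.1 (f x) := (SimpleGraph.mem_neighborFinset ..).mp (hf x)
  refine ⟨?_, hadj⟩
  rw [nbhd_eq_biUnion G hIind hSI, Finset.mem_biUnion]
  exact ⟨x.1, x.2, hf x⟩
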